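/- Let (X,d) be a metric space and T : X → X a map (not assumed continuous, and X not assumed complete). Suppose there exist functions φₙ : X × X → [0,∞) with d(Tⁿx, Tⁿy) ≤ φₙ(x,y) for all x,y ∈ X and n ∈ ℕ, such that φₙ converges pointwise to φ : X × X → [0,∞) uniformly on B × B for every bounded subset B ⊂ X; and suppose there is ψ : [0,∞) → [0,∞), nondecreasing, right upper semicontinuous, with ψ(t) < t for all t > 0, such that φ(x,y) ≤ ψ(M(x,y)) for all x,y, where M(x,y) = max{d(x,y), d(Tx,x), d(Ty,y), d(Ty,x), d(Tx,y)}. If x₀ ∈ X has bounded orbit, then the sequence xₙ = Tⁿx₀ is a Cauchy sequence. -/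

import Mathlib

open Set Filter Function

/-- for an asymptotic pointwise contraction on an arbitrary metric
space (no completeness, no continuity), the orbit sequence of any point with
bounded orbit is Cauchy. -/
theorem stmt_9 {X : Type*} [MetricSpace X]
    (T : X → X)
    (φ : ℕ → X → X → ℝ) (φlim : X → X → ℝ)
    (hφ_nonneg : ∀ n x y, 0 ≤ φ n x y)
    (hφlim_nonneg : ∀ x y, 0 ≤ φlim x y)
    (hd : ∀ n x y, dist (T^[n] x) (T^[n] y) ≤ φ n x y)
    (hconv : ∀ x y, Tendsto (fun n => φ n x y) atTop (nhds (φlim x y)))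
    (hunif : ∀ B : Set X, Bornology.IsBounded B → ∀ ε > 0, ∃ N, ∀ n ≥ N,
      ∀ x ∈ B, ∀ y ∈ B, |φ n x y - φlim x y| ≤ ε)
    (ψ : ℝ → ℝ)
    (hψ_nonneg : ∀ t, 0 ≤ t → 0 ≤ ψ t)
    (hψ_mono : ∀ s t, 0 ≤ s → s ≤ t → ψ s ≤ ψ t)
    (hψ_usc : ∀ t₀, 0 ≤ t₀ → limsup ψ (nhdsWithin t₀ (Ioi t₀)) ≤ ψ t₀)
    (hψ_lt : ∀ t, 0 < t → ψ t < t)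
    (hφψ : ∀ x y, φlim x y ≤ ψ (max (dist x y) (max (dist (T x) x)
      (max (dist (T y) y) (max (dist (T y) x) (dist (T x) y))))))
    (x₀ : X) (hx₀ : Bornology.IsBounded (Set.range fun n => T^[n] x₀)) :
    CauchySeq (fun n => T^[n] x₀) := by
  set f : ℕ → X := fun n => T^[n] x₀ with hf
  set S : ℕ → Set X := fun m => f '' Set.Ici m with hS
  have hSb : ∀ m, Bornology.IsBounded (S m) := by
    intro m
    exact hx₀.subset (by rintro _ ⟨i, -, rfl⟩; exact ⟨i, rfl⟩)
  set D : ℕ → ℝ := fun m => Metric.diam (S m) with hD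
  have hD0 : ∀ m, 0 ≤ D m := fun m => Metric.diam_nonneg
  have hDanti : Antitone D := by
    intro a b hab
    exact Metric.diam_mono (Set.image_mono (Set.Ici_subset_Ici.2 hab)) (hSb a)
  have hmem : ∀ {m i : ℕ}, m ≤ i → f i ∈ S m := fun {m i} h => ⟨i, h, rfl⟩
  have hdist_le : ∀ {m i j : ℕ}, m ≤ i → m ≤ j → dist (f i) (f j) ≤ D m :=
    fun {m i j} hi hj => Metric.dist_le_diam_of_mem (hSb m) (hmem hi) (hmem hj)
  have hTf : ∀ k, T (f k) = f (k + 1) := by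
    intro k; simp [hf, Function.iterate_succ_apply']
  -- key inequality : D (N + m) ≤ ψ (D m) + ε
  have key : ∀ ε > (0:ℝ), ∃ N, ∀ m, D (N + m) ≤ ψ (D m) + ε := by
    intro ε hε
    obtain ⟨N, hN⟩ := hunif (Set.range fun n => T^[n] x₀) hx₀ ε hε
    refine ⟨N, fun m => ?_⟩
    have hψD : 0 ≤ ψ (D m) := hψ_nonneg _ (hD0 m)
    refine Metric.diam_le_of_forall_dist_le (by linarith) ?_
    rintro _ ⟨i, hi, rfl⟩ _ ⟨j, hj, rfl⟩
    simp only [Set.mem_Ici] at hi hj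
    have hiN : N ≤ i := le_trans (Nat.le_add_right _ _) hi
    have hjN : N ≤ j := le_trans (Nat.le_add_right _ _) hj
    set a := f (i - N) with ha
    set b := f (j - N) with hb
    have hia : T^[N] a = f i := by
      rw [ha, hf]
      simp only []
      rw [← Function.iterate_add_apply]
      congr 1
      omega
    have hjb : T^[N] b = f j := by
      rw [hb, hf]
      simp only []
      rw [← Function.iterate_add_apply]
      congr 1
      omega
    have h1 : dist (f i) (f j) ≤ φ N a b := by
      rw [← hia, ← hjb]; exact hd N a b
    have h2 : φ N a b ≤ φlim a b + ε := by
      have := hN N le_rfl a ⟨i - N, rfl⟩ b ⟨j - N, rfl⟩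
      have := abs_le.1 this
      linarith [this.2]
    have hma : m ≤ i - N := by omega
    have hmb : m ≤ j - N := by omega
    -- each term of M(a,b) is ≤ D m
    have hMle : max (dist a b) (max (dist (T a) a)
        (max (dist (T b) b) (max (dist (T b) a) (dist (T a) b)))) ≤ D m := by
      rw [ha, hb, hTf, hTf]
      refine max_le (hdist_le hma hmb) (max_le (hdist_le (by omega) hma)
        (max_le (hdist_le (by omega) hmb) (max_le (hdist_le (by omega) hma)
          (hdist_le (by omega) hmb))))
    have hM0 : 0 ≤ max (dist a b) (max (dist (T a) a)
        (max (dist (T b) b) (max (dist (T b) a) (dist (T a) b)))) :=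
      le_trans dist_nonneg (le_max_left _ _)
    have h3 : φlim a b ≤ ψ (D m) :=
      le_trans (hφψ a b) (hψ_mono _ _ hM0 hMle)
    linarith
  -- δ := inf of D
  set δ : ℝ := ⨅ m, D m with hδ
  have hbdd : BddBelow (Set.range D) := ⟨0, by rintro _ ⟨m, rfl⟩; exact hD0 m⟩
  have hδ0 : 0 ≤ δ := le_ciInf hD0
  have hδle : ∀ m, δ ≤ D m := fun m => ciInf_le hbdd m
  have hDtend : Tendsto D atTop (nhds δ) := tendsto_atTop_ciInf hDanti hbdd
  -- δ = 0
  have hδeq : δ = 0 := by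
    by_contra hne
    have hδpos : 0 < δ := lt_of_le_of_ne hδ0 (Ne.symm hne)
    have hψδ : ψ δ < δ := hψ_lt δ hδpos
    by_cases hc : ∃ m, D m ≤ δ
    · obtain ⟨m, hm⟩ := hc
      have hmeq : D m = δ := le_antisymm hm (hδle m)
      have hεpos : (0:ℝ) < (δ - ψ δ) / 2 := by linarith
      obtain ⟨N, hN⟩ := key _ hεpos
      have := hN m
      rw [hmeq] at this
      have := le_trans (hδle (N + m)) this
      linarith
    · push_neg at hc
      have hεpos : (0:ℝ) < (δ - ψ δ) / 3 := by linarith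
      set ε := (δ - ψ δ) / 3 with hε
      -- boundedness of ψ near δ from the right
      have hbd : Filter.IsBoundedUnder (· ≤ ·) (nhdsWithin δ (Set.Ioi δ)) ψ := by
        refine ⟨ψ (δ + 1), ?_⟩
        rw [Filter.eventually_map]
        filter_upwards [Ioc_mem_nhdsGT_of_mem (show δ ∈ Set.Ico δ (δ + 1) from Set.left_mem_Ico.2 (by linarith))]
          with t ht
        exact hψ_mono t (δ + 1) (le_of_lt (lt_of_le_of_lt hδ0 ht.1)) ht.2
      have husc : limsup ψ (nhdsWithin δ (Set.Ioi δ)) < ψ δ + ε :=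
        lt_of_le_of_lt (hψ_usc δ hδ0) (by linarith)
      have hev : ∀ᶠ t in nhdsWithin δ (Set.Ioi δ), ψ t < ψ δ + ε :=
        Filter.eventually_lt_of_limsup_lt husc hbd
      have hDtend' : Tendsto D atTop (nhdsWithin δ (Set.Ioi δ)) :=
        tendsto_nhdsWithin_of_tendsto_nhds_of_eventually_within D hDtend
          (Filter.Eventually.of_forall (fun m => hc m))
      obtain ⟨m, hm⟩ := (hDtend'.eventually hev).exists
      obtain ⟨N, hN⟩ := key ε hεpos
      have h1 : δ ≤ ψ (D m) + ε := le_trans (hδle (N + m)) (hN m)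
      linarith
  -- conclude Cauchy
  have hDzero : Tendsto D atTop (nhds 0) := hδeq ▸ hDtend
  exact cauchySeq_of_le_tendsto_0 D
    (fun n m N hn hm => hdist_le hn hm) hDzero
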